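/- Let \(M\) be a real 3×3 matrix with \(\det M > 0\), and let \(M = AS\) be its polar decomposition with \(A\) orthogonal and \(S\) symmetric positive definite. Then \(A \in SO_3(\mathbb{R})\), and \(A\) is the unique maximizer of the function \(B \mapsto \tfrac{1}{2}\mathrm{Tr}(B^\mathsf{T} M)\) over \(B \in SO_3(\mathbb{R})\). -/

import Mathlib

open scoped Matrix

noncomputable section

/-- The space of real 3×3 matrices. -/
abbrev Mat3 := Matrix (Fin 3) (Fin 3) ℝ

/-- If `det M > 0` and `M = A S` is the polar decomposition of `M` (`A` orthogonal, `S`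
symmetric positive definite), then `A ∈ SO₃(ℝ)` and `A` is the unique maximizer of
`B ↦ ½ Tr(Bᵀ M)` over `SO₃(ℝ)`. -/
theorem polar_factor_is_unique_maximizer (M A S : Mat3) (hdet : 0 < M.det)
    (hA : Aᵀ * A = 1) (hS : Sᵀ = S)
    (hSpos : ∀ x : Fin 3 → ℝ, x ≠ 0 → 0 < x ⬝ᵥ (S *ᵥ x)) (hM : M = A * S) :
    (Aᵀ * A = 1 ∧ A.det = 1) ∧
    (∀ B : Mat3, Bᵀ * B = 1 → B.det = 1 → B ≠ A →
      (1 / 2 : ℝ) * Matrix.trace (Bᵀ * M) < (1 / 2 : ℝ) * Matrix.trace (Aᵀ * M)) := by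
  have hSpd : S.PosDef := by
    refine Matrix.PosDef.of_dotProduct_mulVec_pos ?_ ?_
    · simpa [Matrix.IsHermitian] using hS
    · intro x hx; simpa using hSpos x hx
  have hSnn : ∀ x : Fin 3 → ℝ, 0 ≤ x ⬝ᵥ (S *ᵥ x) := by
    intro x
    rcases eq_or_ne x 0 with h | h
    · simp [h]
    · exact (hSpos x h).le
  have hdetS : 0 < S.det := hSpd.det_pos
  have hAAt : A * Aᵀ = 1 := mul_eq_one_comm.mp hA
  have hdetA2 : A.det * A.det = 1 := by
    have := congrArg Matrix.det hA
    simpa [Matrix.det_mul, Matrix.det_transpose] using this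
  have hdetApos : 0 < A.det := by
    have hdm : M.det = A.det * S.det := by rw [hM, Matrix.det_mul]
    nlinarith
  have hdetA1 : A.det = 1 := by nlinarith
  refine ⟨⟨hA, hdetA1⟩, ?_⟩
  intro B hB hBdet hBA
  have htrA : Matrix.trace (Aᵀ * M) = Matrix.trace S := by
    rw [hM, ← mul_assoc, hA, one_mul]
  set Q : Mat3 := Aᵀ * B with hQdef
  have hQt : Qᵀ = Bᵀ * A := by
    simp [hQdef, Matrix.transpose_mul]
  have hQQt : Q * Qᵀ = 1 := by
    rw [hQt, hQdef, mul_assoc, ← mul_assoc B Bᵀ A]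
    rw [mul_eq_one_comm.mp hB, one_mul, hA]
  have hQtQ : Qᵀ * Q = 1 := mul_eq_one_comm.mp hQQt
  have htrB : Matrix.trace (Bᵀ * M) = Matrix.trace (Qᵀ * S) := by
    rw [hM, ← mul_assoc, hQt]
  -- trace(S*Q) = trace(Qᵀ*S)
  have htr_comm : Matrix.trace (S * Q) = Matrix.trace (Qᵀ * S) := by
    rw [← Matrix.trace_transpose (S * Q), Matrix.transpose_mul, hS, Matrix.trace_mul_comm]
  set N : Mat3 := 1 - Q with hNdef
  have hNne : N ≠ 0 := by
    intro h
    apply hBA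
    have hQ1 : Q = 1 := by
      have := sub_eq_zero.mp h
      exact this.symm
    have := congrArg (fun X => A * X) hQ1
    simpa [hQdef, ← mul_assoc, hAAt] using this
  have hexpand : Nᵀ * S * N = S - Qᵀ * S - S * Q + Qᵀ * S * Q := by
    simp [hNdef, Matrix.transpose_sub, sub_mul, mul_sub]
    noncomm_ring
  have htrQSQ : Matrix.trace (Qᵀ * S * Q) = Matrix.trace S := by
    rw [Matrix.trace_mul_cycle, hQQt, one_mul]
  have hkey : Matrix.trace (Nᵀ * S * N) =
      2 * (Matrix.trace S - Matrix.trace (Qᵀ * S)) := by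
    rw [hexpand]
    simp only [Matrix.trace_add, Matrix.trace_sub]
    rw [htrQSQ, htr_comm]
    ring
  have hpos : 0 < Matrix.trace (Nᵀ * S * N) := by
    -- trace as sum of quadratic forms over columns
    have hcol : ∀ j, (Nᵀ * S * N) j j = (fun i => N i j) ⬝ᵥ (S *ᵥ fun i => N i j) := by
      intro j
      simp only [Matrix.mul_apply, Matrix.transpose_apply, dotProduct,
        Matrix.mulVec, Finset.sum_mul, Finset.mul_sum]
      rw [Finset.sum_comm]
      apply Finset.sum_congr rfl; intro i _
      apply Finset.sum_congr rfl; intro k _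
      ring
    obtain ⟨i₀, j₀, hij⟩ : ∃ i j, N i j ≠ 0 := by
      by_contra h
      push_neg at h
      exact hNne (by ext i j; simpa using h i j)
    have hcne : (fun i => N i j₀) ≠ 0 := by
      intro h
      exact hij (congrFun h i₀)
    rw [Matrix.trace]
    apply Finset.sum_pos'
    · intro j _
      simp only [Matrix.diag_apply]
      rw [hcol j]
      exact hSnn _
    · exact ⟨j₀, Finset.mem_univ _, by
        simp only [Matrix.diag_apply]
        rw [hcol j₀]
        exact hSpos _ hcne⟩
  have : Matrix.trace (Qᵀ * S) < Matrix.trace S := by linarith [hkey ▸ hpos]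
  rw [htrA, htrB]
  linarith
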